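/- Let X be a finite-dimensional real inner product space, let Ω* ⊆ X be a nonempty set, let {x^k}_{k≥0} ⊆ X, and let {a_k}_{k≥0} be nonnegative reals with ∑_{k=0}^{∞} a_k < ∞ such that for every k ∈ ℕ₀ and every x̃ ∈ Ω*: ‖x^{k+1} − x̃‖² ≤ ‖x^k − x̃‖² + a_k. Suppose x^k converges to some x* ∈ Ω*. Then for every k ∈ ℕ₀: ‖x^k − x*‖² ≤ 4·(dist(x^k, Ω*)² + ∑_{i=k}^{∞} a_i), where dist(x, Ω*) = inf_{z ∈ Ω*} ‖x − z‖. -/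

import Mathlib

open scoped InnerProductSpace

/-- Quasi-Fejér monotone sequences: if `‖x^{k+1} - x̃‖² ≤ ‖x^k - x̃‖² + a_k` for all
`x̃ ∈ Ω*` with `a_k ≥ 0` summable, and `x^k → x* ∈ Ω*`, then
`‖x^k - x*‖² ≤ 4 (dist(x^k, Ω*)² + ∑_{i ≥ k} a_i)`. -/
theorem quasi_fejer_dist_bound
    {X : Type*} [NormedAddCommGroup X] [InnerProductSpace ℝ X] [FiniteDimensional ℝ X]
    (Ω : Set X) (hΩ : Ω.Nonempty)
    (x : ℕ → X) (a : ℕ → ℝ) (ha : ∀ k, 0 ≤ a k) (hsum : Summable a)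
    (hfejer : ∀ k : ℕ, ∀ xt ∈ Ω, ‖x (k + 1) - xt‖ ^ 2 ≤ ‖x k - xt‖ ^ 2 + a k)
    (xs : X) (hxs : xs ∈ Ω) (hconv : Filter.Tendsto x Filter.atTop (nhds xs)) :
    ∀ k : ℕ, ‖x k - xs‖ ^ 2 ≤
      4 * (Metric.infDist (x k) Ω ^ 2 + ∑' i : ℕ, a (k + i)) := by
  intro k
  set T : ℝ := ∑' i : ℕ, a (k + i) with hT
  have hTnn : 0 ≤ T := tsum_nonneg (fun i => ha _)
  have hsumtail : Summable (fun i => a (k + i)) := by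
    have := (summable_nat_add_iff k).2 hsum
    simpa [add_comm] using this
  have key : ∀ z ∈ Ω, ‖xs - z‖ ^ 2 ≤ ‖x k - z‖ ^ 2 + T := by
    intro z hz
    have step : ∀ m, ‖x (k + m) - z‖ ^ 2 ≤ ‖x k - z‖ ^ 2 + ∑ i ∈ Finset.range m, a (k + i) := by
      intro m
      induction m with
      | zero => simp
      | succ m ih =>
        have h1 := hfejer (k + m) z hz
        rw [Finset.sum_range_succ]
        have : k + (m + 1) = k + m + 1 := by ring
        rw [this]
        linarith
    have step2 : ∀ m, ‖x (k + m) - z‖ ^ 2 ≤ ‖x k - z‖ ^ 2 + T := by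
      intro m
      refine (step m).trans (add_le_add (le_refl _) ?_)
      exact Summable.sum_le_tsum _ (fun i _ => ha _) hsumtail
    have h1 : Filter.Tendsto (fun m => x (k + m)) Filter.atTop (nhds xs) := by
      have := hconv.comp (Filter.tendsto_add_atTop_nat k)
      simpa [Function.comp_def, add_comm] using this
    have hlim : Filter.Tendsto (fun m => ‖x (k + m) - z‖ ^ 2) Filter.atTop
        (nhds (‖xs - z‖ ^ 2)) :=
      ((h1.sub tendsto_const_nhds).norm).pow 2
    exact le_of_tendsto hlim (Filter.Eventually.of_forall step2)
  have main : ∀ z ∈ Ω, ‖x k - xs‖ ^ 2 ≤ 4 * (‖x k - z‖ ^ 2 + T) := by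
    intro z hz
    have h2 := key z hz
    have htri : ‖x k - xs‖ ≤ ‖x k - z‖ + ‖xs - z‖ := by
      have : x k - xs = (x k - z) + (z - xs) := by abel
      rw [this]
      calc ‖(x k - z) + (z - xs)‖ ≤ ‖x k - z‖ + ‖z - xs‖ := norm_add_le _ _
        _ = ‖x k - z‖ + ‖xs - z‖ := by rw [norm_sub_rev z xs]
    have hA := norm_nonneg (x k - xs)
    have hB := norm_nonneg (x k - z)
    have hC := norm_nonneg (xs - z)
    nlinarith [sq_nonneg (‖x k - z‖ - ‖xs - z‖), sq_nonneg (‖x k - z‖ + ‖xs - z‖)]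
  refine le_of_forall_pos_le_add ?_
  intro ε hε
  set d := Metric.infDist (x k) Ω with hd
  have hdnn : 0 ≤ d := Metric.infDist_nonneg
  set δ : ℝ := min 1 (ε / (8 * d + 8)) with hδ
  have hδpos : 0 < δ := lt_min one_pos (by positivity)
  have hδ1 : δ ≤ 1 := min_le_left _ _
  have hδ2 : δ ≤ ε / (8 * d + 8) := min_le_right _ _
  obtain ⟨z, hz, hzd⟩ := (Metric.infDist_lt_iff hΩ).1
    (show d < d + δ by linarith)
  have hnorm : ‖x k - z‖ < d + δ := by
    rwa [← dist_eq_norm]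
  have hsq : ‖x k - z‖ ^ 2 ≤ (d + δ) ^ 2 := by
    have := norm_nonneg (x k - z)
    nlinarith
  have h3 := main z hz
  have hδmul : δ * (8 * d + 8) ≤ ε := by
    have h8 : (0:ℝ) < 8 * d + 8 := by positivity
    calc δ * (8 * d + 8) ≤ (ε / (8 * d + 8)) * (8 * d + 8) := by
          exact mul_le_mul_of_nonneg_right hδ2 h8.le
      _ = ε := div_mul_cancel₀ _ h8.ne'
  nlinarith [sq_nonneg δ]
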